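/- Let n ≥ 1, τ > 0, A, B, H(λ,K), L, and the closed-loop system be as in the context. Consensus is reached asymptotically if and only if for every i = 2,…,N, every complex root z of the polynomial R_i(z,K) := (z − 1)^n + λ_i Σ_{p=1}^{n} τ^p K_{n+1−p} (z − 1)^{n−p} satisfies |z| < 1. -/

import Mathlib

open Matrix Kronecker Filter

/-- The n×n system matrix `A`: ones on the diagonal, `τ` on the superdiagonal. -/
noncomputable def Amat (n : ℕ) (τ : ℝ) : Matrix (Fin n) (Fin n) ℝ :=
  Matrix.of fun i j => if (j : ℕ) = (i : ℕ) then 1 else if (j : ℕ) = (i : ℕ) + 1 then τ else 0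

/-- The n×1 input matrix `B`: last entry `τ`, all other entries `0`. -/
noncomputable def Bmat (n : ℕ) (τ : ℝ) : Matrix (Fin n) (Fin 1) ℝ :=
  Matrix.of fun i _ => if (i : ℕ) = n - 1 then τ else 0

set_option linter.unusedTactic false
set_option linter.unreachableTactic false
set_option linter.unnecessarySeqFocus false
set_option maxHeartbeats 1000000


lemma detAux (t : ℂ) : ∀ (n : ℕ) (w : ℂ) (c : Fin n → ℂ),
    (Matrix.of fun i j : Fin n =>
      (if j = i then w else 0) + (if (j:ℕ) = (i:ℕ)+1 then -t else 0)
        + (if (i:ℕ) = n-1 then c j else 0)).det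
    = w^n + ∑ j : Fin n, c j * t^(n-1-(j:ℕ)) * w^(j:ℕ) := by
  intro n
  induction n with
  | zero => intro w c; simp [Matrix.det_isEmpty]
  | succ m ih =>
    intro w c
    match m, ih with
    | 0, _ =>
      simp [Matrix.det_fin_one]
    | (m+1), ih =>
      rw [Matrix.det_succ_column_zero]
      rw [Finset.sum_eq_add_of_mem (0 : Fin (m+2)) (Fin.last (m+1)) (Finset.mem_univ _)
        (Finset.mem_univ _) (by simp [Fin.ext_iff]) ?_]
      · -- the two surviving cofactor terms
        have h0 : ((Matrix.of fun i j : Fin (m+2) =>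
            (if j = i then w else 0) + (if (j:ℕ) = (i:ℕ)+1 then -t else 0)
              + (if (i:ℕ) = (m+2)-1 then c j else 0)).submatrix (Fin.succAbove 0) Fin.succ)
            = Matrix.of fun i j : Fin (m+1) =>
            (if j = i then w else 0) + (if (j:ℕ) = (i:ℕ)+1 then -t else 0)
              + (if (i:ℕ) = (m+1)-1 then (c ∘ Fin.succ) j else 0) := by
          ext i j
          simp only [Matrix.submatrix_apply, Matrix.of_apply, Fin.succAbove_zero,
            Function.comp_apply]
          refine congrArg₂ (·+·) (congrArg₂ (·+·) ?_ ?_) ?_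
          · exact if_congr Fin.succ_inj rfl rfl
          · exact if_congr (by simp only [Fin.val_succ]; omega) rfl rfl
          · exact if_congr (by simp only [Fin.val_succ]; omega) rfl rfl
        have hlow : ((Matrix.of fun i j : Fin (m+2) =>
            (if j = i then w else 0) + (if (j:ℕ) = (i:ℕ)+1 then -t else 0)
              + (if (i:ℕ) = (m+2)-1 then c j else 0)).submatrix
                (Fin.succAbove (Fin.last (m+1))) Fin.succ).det = (-t)^(m+1) := by
          rw [Fin.succAbove_last]
          rw [Matrix.det_of_lowerTriangular _ ?_]
          · rw [Finset.prod_congr rfl (g := fun _ : Fin (m+1) => -t) ?_]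
            · simp
            · intro i _
              simp only [Matrix.submatrix_apply, Matrix.of_apply]
              have hi := i.isLt
              have h1 : ¬ (i.succ = i.castSucc) := by
                simp only [Fin.ext_iff, Fin.val_succ, Fin.coe_castSucc]; omega
              have h2 : ((i.succ : Fin (m+2)):ℕ) = ((i.castSucc : Fin (m+2)):ℕ)+1 := by
                simp [Fin.val_succ]
              have h3 : ¬ (((i.castSucc : Fin (m+2)):ℕ) = (m+2)-1) := by
                simp only [Fin.coe_castSucc]; omega
              have h4 : ¬ ((i:ℕ) = m+1) := by omega
              simp [h1, h2, h3, h4]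
          · intro i j hij
            simp only [OrderDual.toDual_lt_toDual] at hij
            have hij' : (i:ℕ) < (j:ℕ) := hij
            have hi := i.isLt
            simp only [Matrix.submatrix_apply, Matrix.of_apply]
            have h1 : ¬ (j.succ = i.castSucc) := by
              simp only [Fin.ext_iff, Fin.val_succ, Fin.coe_castSucc]; omega
            have h2 : ¬ (((j.succ : Fin (m+2)):ℕ) = ((i.castSucc : Fin (m+2)):ℕ)+1) := by
              simp only [Fin.val_succ, Fin.coe_castSucc]; omega
            have h3 : ¬ (((i.castSucc : Fin (m+2)):ℕ) = (m+2)-1) := by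
              simp only [Fin.coe_castSucc]; omega
            have h4 : ¬ ((j:ℕ) = (i:ℕ)) := by omega
            have h5 : ¬ ((i:ℕ) = m+1) := by omega
            simp [h1, h2, h3, h4, h5]
        rw [h0, ih, hlow]
        have hA00 : (Matrix.of fun i j : Fin (m+2) =>
            (if j = i then w else 0) + (if (j:ℕ) = (i:ℕ)+1 then -t else 0)
              + (if (i:ℕ) = (m+2)-1 then c j else 0)) 0 0 = w := by
          norm_num
        have hAl0 : (Matrix.of fun i j : Fin (m+2) =>
            (if j = i then w else 0) + (if (j:ℕ) = (i:ℕ)+1 then -t else 0)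
              + (if (i:ℕ) = (m+2)-1 then c j else 0)) (Fin.last (m+1)) 0 = c 0 := by
          have h1 : ¬ ((0 : Fin (m+2)) = Fin.last (m+1)) := by
            simp only [Fin.ext_iff, Fin.val_zero, Fin.val_last]; omega
          have h2 : ¬ (((0 : Fin (m+2)):ℕ) = ((Fin.last (m+1) : Fin (m+2)):ℕ)+1) := by
            simp
          have h3 : ((Fin.last (m+1) : Fin (m+2)):ℕ) = (m+2)-1 := by simp
          simp [h1, h2, h3]
        rw [hA00, hAl0]
        simp only [Fin.val_zero, pow_zero, one_mul, Fin.val_last, Function.comp_apply]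
        rw [Fin.sum_univ_succ (f := fun j : Fin (m+2) => c j * t^(m+2-1-(j:ℕ)) * w^(j:ℕ))]
        have hre : ∀ j : Fin (m+1),
            c j.succ * t^(m+2-1-((j.succ:Fin (m+2)):ℕ)) * w^((j.succ:Fin (m+2)):ℕ)
            = (c j.succ * t^(m+1-1-(j:ℕ)) * w^(j:ℕ)) * w := by
          intro j
          have he : m+2-1-((j.succ:Fin (m+2)):ℕ) = m+1-1-(j:ℕ) := by
            simp only [Fin.val_succ]; omega
          rw [he, Fin.val_succ, pow_succ]
          ring
        rw [Finset.sum_congr rfl (fun j _ => hre j)]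
        have hsign : ((-1:ℂ))^(m+1) * c 0 * (-t)^(m+1) = c 0 * t^(m+1) := by
          rw [mul_comm ((-1:ℂ)^(m+1)) (c 0), mul_assoc, ← mul_pow]
          norm_num
        rw [hsign]
        simp only [Fin.val_zero, Nat.sub_zero, pow_zero, mul_one]
        have he2 : m+2-1 = m+1 := by omega
        rw [he2, mul_add, Finset.mul_sum]
        have hs : ∑ i : Fin (m+1), w * (c i.succ * t^(m+1-1-(i:ℕ)) * w^(i:ℕ))
            = ∑ j : Fin (m+1), c j.succ * t^(m+1-1-(j:ℕ)) * w^(j:ℕ) * w :=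
          Finset.sum_congr rfl (fun x _ => by ring)
        rw [hs]
        ring
      · rintro i - ⟨hi0, hil⟩
        have hz : (Matrix.of fun i j : Fin (m+2) =>
            (if j = i then w else 0) + (if (j:ℕ) = (i:ℕ)+1 then -t else 0)
              + (if (i:ℕ) = (m+2)-1 then c j else 0)) i 0 = 0 := by
          simp only [Matrix.of_apply]
          have h1 : ¬ ((0:Fin (m+2)) = i) := fun h => hi0 (h.symm)
          have h2 : ¬ (((0:Fin (m+2)):ℕ) = (i:ℕ)+1) := by simp
          have h3 : ¬ ((i:ℕ) = m+1) := by
            intro h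
            exact hil (by apply Fin.ext; simpa using h)
          simp [h1, h2, h3]
        rw [hz]
        ring


section Stab
attribute [local instance] Matrix.frobeniusSeminormedAddCommGroup
  Matrix.frobeniusNormedAddCommGroup Matrix.frobeniusNormedSpace
  Matrix.frobeniusNormedRing Matrix.frobeniusNormedAlgebra

lemma spectrum_iff_det {m : ℕ} (M : Matrix (Fin m) (Fin m) ℂ) (z : ℂ) :
    z ∈ spectrum ℂ M ↔ (z • (1 : Matrix (Fin m) (Fin m) ℂ) - M).det = 0 := by
  rw [spectrum.mem_iff, Matrix.isUnit_iff_isUnit_det, isUnit_iff_ne_zero, not_not,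
    Algebra.algebraMap_eq_smul_one]

lemma entry_le_frob {m : ℕ} (A : Matrix (Fin m) (Fin m) ℂ) (i j : Fin m) :
    ‖A i j‖ ≤ ‖A‖ := by
  rw [Matrix.frobenius_norm_def]
  have h1 : ‖A i j‖ = (‖A i j‖ ^ (2:ℝ)) ^ (1/2:ℝ) := by
    rw [← Real.rpow_mul (norm_nonneg _)]
    norm_num
  rw [h1]
  apply Real.rpow_le_rpow (by positivity) ?_ (by norm_num)
  calc ‖A i j‖ ^ (2:ℝ) ≤ ∑ j', ‖A i j'‖ ^ (2:ℝ) := by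
        apply Finset.single_le_sum (f := fun j' => ‖A i j'‖ ^ (2:ℝ))
          (fun _ _ => by positivity) (Finset.mem_univ j)
    _ ≤ ∑ i', ∑ j', ‖A i' j'‖ ^ (2:ℝ) := by
        apply Finset.single_le_sum (f := fun i' => ∑ j', ‖A i' j'‖ ^ (2:ℝ))
          (fun _ _ => by positivity) (Finset.mem_univ i)

lemma pow_entry_tendsto {m : ℕ} (hm : 0 < m) (M : Matrix (Fin m) (Fin m) ℂ)
    (h : ∀ z ∈ spectrum ℂ M, ‖z‖ < 1) (i j : Fin m) :
    Tendsto (fun k => (M ^ k) i j) atTop (nhds 0) := by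
  haveI : CompleteSpace (Matrix (Fin m) (Fin m) ℂ) :=
    FiniteDimensional.complete ℂ (Matrix (Fin m) (Fin m) ℂ)
  haveI : Nontrivial (Matrix (Fin m) (Fin m) ℂ) := by
    refine ⟨0, 1, fun hc => ?_⟩
    have := congr_fun (congr_fun hc ⟨0, hm⟩) ⟨0, hm⟩
    simp [Matrix.one_apply] at this
  have hrad : spectralRadius ℂ M < 1 := by
    have := spectrum.spectralRadius_lt_of_forall_lt M (r := 1)
      (fun z hz => by
        have := h z hz
        rw [← NNReal.coe_lt_coe]
        simpa using this)
    simpa using this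
  obtain ⟨r, hr1, hr2⟩ := ENNReal.lt_iff_exists_nnreal_btwn.mp hrad
  have hr2' : (r:ℝ) < 1 := by exact_mod_cast hr2
  have hgel := spectrum.pow_nnnorm_pow_one_div_tendsto_nhds_spectralRadius M
  have hev : ∀ᶠ k : ℕ in atTop, ((‖M ^ k‖₊ : ENNReal) ^ (1/(k:ℝ))) < (r : ENNReal) :=
    hgel.eventually_lt_const hr1
  have hbound : ∀ᶠ k : ℕ in atTop, ‖M ^ k‖ ≤ (r:ℝ) ^ k := by
    filter_upwards [hev, eventually_ge_atTop 1] with k hk hk1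
    have hk0 : (k:ℝ) ≠ 0 := by positivity
    have h2 : ((‖M ^ k‖₊ : ENNReal) ^ (1/(k:ℝ))) ^ (k:ℝ) < ((r:ENNReal)) ^ (k:ℝ) :=
      ENNReal.rpow_lt_rpow hk (by positivity)
    rw [← ENNReal.rpow_mul, one_div, inv_mul_cancel₀ hk0, ENNReal.rpow_one] at h2
    have h3 : (‖M ^ k‖₊ : ENNReal) < ((r:ENNReal)) ^ (k:ℕ) := by
      rw [← ENNReal.rpow_natCast]; exact h2
    rw [← ENNReal.coe_pow, ENNReal.coe_lt_coe] at h3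
    have h4 := NNReal.coe_le_coe.mpr h3.le
    simpa [coe_nnnorm, NNReal.coe_pow] using h4
  rw [tendsto_zero_iff_norm_tendsto_zero]
  apply squeeze_zero' (Eventually.of_forall (fun k => norm_nonneg _))
  · filter_upwards [hbound] with k hk
    exact (entry_le_frob (M ^ k) i j).trans hk
  · exact tendsto_pow_atTop_nhds_zero_of_lt_one r.coe_nonneg hr2'

end Stab

lemma abs_lt_one_of_pow_tendsto {m : ℕ} (M : Matrix (Fin m) (Fin m) ℂ)
    (h : ∀ i j, Tendsto (fun k => (M ^ k) i j) atTop (nhds 0)) {z : ℂ}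
    (hz : (z • (1 : Matrix (Fin m) (Fin m) ℂ) - M).det = 0) : ‖z‖ < 1 := by
  by_contra hc
  push_neg at hc
  obtain ⟨v, hv0, hv⟩ := Matrix.exists_mulVec_eq_zero_iff.mpr hz
  have hMv : M *ᵥ v = z • v := by
    have h1 := Matrix.sub_mulVec (z • (1 : Matrix (Fin m) (Fin m) ℂ)) M v
    rw [hv, Matrix.smul_mulVec, Matrix.one_mulVec] at h1
    exact (sub_eq_zero.mp h1.symm).symm
  have hk : ∀ k : ℕ, (M ^ k) *ᵥ v = z ^ k • v := by
    intro k
    induction k with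
    | zero => simp [Matrix.one_mulVec]
    | succ k ihk =>
      rw [pow_succ, ← Matrix.mulVec_mulVec, hMv, Matrix.mulVec_smul, ihk, smul_smul,
        pow_succ]
      rw [mul_comm]
  obtain ⟨l, hl⟩ := Function.ne_iff.mp hv0
  simp only [Pi.zero_apply] at hl
  have hten : Tendsto (fun k => ((M ^ k) *ᵥ v) l) atTop (nhds 0) := by
    have he : ∀ k : ℕ, ((M ^ k) *ᵥ v) l = ∑ j', (M ^ k) l j' * v j' := by
      intro k; rfl
    simp only [he]
    have h0 : (0:ℂ) = ∑ j' : Fin m, 0 * v j' := by simp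
    rw [h0]
    exact tendsto_finset_sum _ (fun j' _ => (h l j').mul_const (v j'))
  have hten2 : Tendsto (fun k => z ^ k * v l) atTop (nhds 0) := by
    simpa [hk, Pi.smul_apply, smul_eq_mul] using hten
  have habs : Tendsto (fun k => ‖z ^ k * v l‖) atTop (nhds 0) := by
    have := tendsto_zero_iff_norm_tendsto_zero.mp hten2
    simpa using this
  have hge : ∀ k : ℕ, ‖v l‖ ≤ ‖z ^ k * v l‖ := by
    intro k
    rw [norm_mul, norm_pow]
    have h1 : (1:ℝ) ≤ ‖z‖ ^ k := one_le_pow₀ hc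
    nlinarith [norm_nonneg (v l)]
  have hfin : ‖v l‖ ≤ 0 := ge_of_tendsto habs (Eventually.of_forall hge)
  have := norm_pos_iff.mpr hl
  linarith


lemma charpoly_link (n : ℕ) (hn : 1 ≤ n) (τ : ℝ) (K : Matrix (Fin 1) (Fin n) ℝ)
    (lam : ℝ) (z : ℂ) :
    (z • (1 : Matrix (Fin n) (Fin n) ℂ)
        - ((Amat n τ - lam • (Bmat n τ * K)).map (fun x : ℝ => (x:ℂ)))).det
    = (z - 1) ^ n + ((lam : ℝ) : ℂ) *
        ∑ p : Fin n, (τ : ℂ) ^ ((p : ℕ) + 1) *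
          ((K 0 ⟨n - 1 - (p : ℕ), by have := p.isLt; omega⟩ : ℝ) : ℂ) *
          (z - 1) ^ (n - 1 - (p : ℕ)) := by
  have hM : (z • (1 : Matrix (Fin n) (Fin n) ℂ)
        - ((Amat n τ - lam • (Bmat n τ * K)).map (fun x : ℝ => (x:ℂ))))
      = Matrix.of fun i j : Fin n =>
        (if j = i then (z-1) else 0) + (if (j:ℕ) = (i:ℕ)+1 then -(τ:ℂ) else 0)
          + (if (i:ℕ) = n-1 then (lam:ℂ)*(τ:ℂ)*((K 0 j : ℝ):ℂ) else 0) := by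
    ext i j
    simp only [Matrix.sub_apply, Matrix.smul_apply, Matrix.one_apply, Matrix.map_apply,
      Matrix.of_apply, Amat, Bmat, Matrix.mul_apply, Fin.sum_univ_one, smul_eq_mul]
    by_cases h1 : (j:ℕ) = (i:ℕ)
    · have h1' : j = i := Fin.ext h1
      have h2 : ¬ ((j:ℕ) = (i:ℕ)+1) := by omega
      by_cases h3 : (i:ℕ) = n-1 <;>
        · simp [h1', h1, h2, h3] <;> (push_cast; ring)
    · have h1' : ¬ (j = i) := fun h => h1 (congrArg Fin.val h)
      have h1'' : ¬ (i = j) := fun h => h1' h.symm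
      by_cases h2 : (j:ℕ) = (i:ℕ)+1
      · by_cases h3 : (i:ℕ) = n-1
        · exfalso; have := j.isLt; omega
        · simp [h1', h1'', h1, h2, h3] <;> (push_cast; ring)
      · by_cases h3 : (i:ℕ) = n-1
        · have h4 : ¬ ((j:ℕ) = n-1) := by omega
          have h5 : ¬ ((j:ℕ) = 1+(n-1)) := by omega
          have h6 : ¬ ((j:ℕ) = (n-1)+1) := by omega
          simp [h1', h1'', h1, h2, h3, h4, h5, h6] <;> (push_cast; ring)
        · simp [h1', h1'', h1, h2, h3] <;> (push_cast; ring)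
  rw [hM, detAux]
  congr 1
  have hsum : (∑ p : Fin n, (τ : ℂ) ^ ((p : ℕ) + 1) *
          ((K 0 ⟨n - 1 - (p : ℕ), by have := p.isLt; omega⟩ : ℝ) : ℂ) *
          (z - 1) ^ (n - 1 - (p : ℕ)))
      = ∑ j : Fin n, (τ:ℂ)^(n - (j:ℕ)) * ((K 0 j : ℝ):ℂ) * (z-1)^(j:ℕ) := by
    refine Fintype.sum_equiv Fin.revPerm _ _ (fun p => ?_)
    have hrev : ((Fin.revPerm p : Fin n) : ℕ) = n - ((p:ℕ)+1) := Fin.val_rev p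
    have hp := p.isLt
    have h1 : n - ((Fin.revPerm p : Fin n) : ℕ) = (p:ℕ)+1 := by rw [hrev]; omega
    have h2 : ((Fin.revPerm p : Fin n) : ℕ) = n - 1 - (p:ℕ) := by rw [hrev]; omega
    rw [h1]
    congr 2
    · exact congrArg (fun x => ((K 0 x : ℝ):ℂ)) (Fin.ext (by rw [h2]))
    · rw [h2]
  rw [hsum, Finset.mul_sum]
  refine Finset.sum_congr rfl (fun j _ => ?_)
  have hj := j.isLt
  rw [show n - (j:ℕ) = (n-1-(j:ℕ))+1 by omega, pow_succ]
  ring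

/-- consensus is reached asymptotically iff for every `i = 2,…,N`, every
complex root `z` of `R_i(z,K) = (z−1)^n + λ_i ∑_{p=1}^n τ^p K_{n+1−p} (z−1)^{n−p}`
satisfies `|z| < 1`.  (The sum is reindexed by `p' = p−1 : Fin n`; the 1-based gain
`K_{n+1-p}` is the 0-based entry `K 0 ⟨n-1-p'⟩`.) -/
theorem stmt_5 (n : ℕ) (hn : 1 ≤ n) (τ : ℝ) (hτ : 0 < τ)
    (N : ℕ) (hN : 2 ≤ N) (L : Matrix (Fin N) (Fin N) ℝ)
    (lam : Fin N → ℝ) (hmono : Monotone lam) (hlam0 : lam ⟨0, by omega⟩ = 0)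
    (hlampos : ∀ i : Fin N, i ≠ ⟨0, by omega⟩ → 0 < lam i)
    (hL1 : L *ᵥ (fun _ => (1 : ℝ)) = 0)
    (hdiag : ∃ V : Matrix (Fin N) (Fin N) ℝ, Vᵀ * V = 1 ∧ L = V * Matrix.diagonal lam * Vᵀ)
    (K : Matrix (Fin 1) (Fin n) ℝ) :
    (∀ x0 : Fin N × Fin n → ℝ, ∀ i j : Fin N, ∀ l : Fin n,
        Tendsto (fun k : ℕ =>
            ((((1 : Matrix (Fin N) (Fin N) ℝ) ⊗ₖ Amat n τ - L ⊗ₖ (Bmat n τ * K)) ^ k) *ᵥ x0) (i, l)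
          - ((((1 : Matrix (Fin N) (Fin N) ℝ) ⊗ₖ Amat n τ - L ⊗ₖ (Bmat n τ * K)) ^ k) *ᵥ x0) (j, l))
          atTop (nhds 0))
    ↔ (∀ i : Fin N, i ≠ ⟨0, by omega⟩ → ∀ z : ℂ,
        (z - 1) ^ n + ((lam i : ℝ) : ℂ) *
            ∑ p : Fin n, (τ : ℂ) ^ ((p : ℕ) + 1) *
              ((K 0 ⟨n - 1 - (p : ℕ), by have := p.isLt; omega⟩ : ℝ) : ℂ) *
              (z - 1) ^ (n - 1 - (p : ℕ)) = 0
        → ‖z‖ < 1) := by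
  classical
  obtain ⟨V, hV, hL⟩ := hdiag
  set i0 : Fin N := ⟨0, by omega⟩ with hi0
  set A' := Amat n τ
  set BK := Bmat n τ * K with hBKdef
  set H : Fin N → Matrix (Fin n) (Fin n) ℝ := fun c => A' - lam c • BK with hH
  set M : Matrix (Fin N × Fin n) (Fin N × Fin n) ℝ :=
    (1 : Matrix (Fin N) (Fin N) ℝ) ⊗ₖ A' - L ⊗ₖ BK with hMdef
  set W : Matrix (Fin N × Fin n) (Fin N × Fin n) ℝ :=
    V ⊗ₖ (1 : Matrix (Fin n) (Fin n) ℝ) with hWdef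
  set Bd : Matrix (Fin N × Fin n) (Fin N × Fin n) ℝ :=
    (1 : Matrix (Fin N) (Fin N) ℝ) ⊗ₖ A' - (Matrix.diagonal lam) ⊗ₖ BK with hBdDef
  have hVVt : V * Vᵀ = 1 := mul_eq_one_comm.mp hV
  have hWtW : Wᵀ * W = 1 := by
    rw [hWdef, ← Matrix.kroneckerMap_transpose, ← Matrix.mul_kronecker_mul, hV,
      Matrix.transpose_one, one_mul, Matrix.one_kronecker_one]
  have hWWt : W * Wᵀ = 1 := mul_eq_one_comm.mp hWtW
  have hMW : M = W * Bd * Wᵀ := by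
    rw [hMdef, hBdDef, hWdef, ← Matrix.kroneckerMap_transpose, Matrix.mul_sub, Matrix.sub_mul,
      ← Matrix.mul_kronecker_mul, ← Matrix.mul_kronecker_mul,
      ← Matrix.mul_kronecker_mul, ← Matrix.mul_kronecker_mul]
    rw [mul_one, one_mul, Matrix.transpose_one, mul_one, hVVt, hL, Matrix.mul_assoc]
    simp
  have hMk : ∀ k : ℕ, M ^ k = W * Bd ^ k * Wᵀ := by
    intro k
    induction k with
    | zero => rw [pow_zero, pow_zero, mul_one, hWWt]
    | succ k ih =>
      rw [pow_succ, ih, pow_succ, hMW]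
      simp only [Matrix.mul_assoc]
      rw [← Matrix.mul_assoc Wᵀ W, hWtW, one_mul]
  have hBdE : ∀ (a c : Fin N) (b d : Fin n), Bd (a,b) (c,d) = if a = c then (H a) b d else 0 := by
    intro a c b d
    rw [hBdDef]
    simp only [Matrix.sub_apply, Matrix.kroneckerMap_apply, Matrix.one_apply,
      Matrix.diagonal_apply]
    by_cases h : a = c
    · subst h
      simp [hH, Matrix.sub_apply, Matrix.smul_apply, smul_eq_mul]
    · simp [h]
  have hBdk : ∀ (k : ℕ) (a c : Fin N) (b d : Fin n),
      (Bd ^ k) (a,b) (c,d) = if a = c then ((H a)^k) b d else 0 := by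
    intro k
    induction k with
    | zero =>
      intro a c b d
      by_cases h : a = c
      · subst h
        by_cases h2 : b = d <;> simp [Matrix.one_apply, Prod.ext_iff, h2]
      · simp [Matrix.one_apply, Prod.ext_iff, h]
    | succ k ih =>
      intro a c b d
      rw [pow_succ, Matrix.mul_apply, Fintype.sum_prod_type]
      have hterm : ∀ c' : Fin N, (∑ d' : Fin n, (Bd ^ k) (a,b) (c',d') * Bd (c',d') (c,d))
          = if a = c' then (if a = c then ∑ d' : Fin n, ((H a)^k) b d' * (H a) d' d else 0)
            else 0 := by
        intro c'
        by_cases h1 : a = c'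
        · subst h1
          by_cases h2 : a = c
          · subst h2
            simp [ih, hBdE]
          · simp [ih, hBdE, h2]
        · simp [ih, h1]
      rw [Finset.sum_congr rfl (fun c' _ => hterm c')]
      rw [Finset.sum_ite_eq]
      simp only [Finset.mem_univ, if_true]
      by_cases h2 : a = c
      · rw [if_pos h2, if_pos h2, ← Matrix.mul_apply, ← pow_succ]
      · rw [if_neg h2, if_neg h2]
  -- entry formula for the evolved state
  have hexp : ∀ (x0 : Fin N × Fin n → ℝ) (k : ℕ) (i : Fin N) (l : Fin n),
      ((M ^ k) *ᵥ x0) (i, l)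
        = ∑ c : Fin N, V i c * ∑ m' : Fin n, ((H c)^k) l m' * (Wᵀ *ᵥ x0) (c, m') := by
    intro x0 k i l
    rw [hMk k, ← Matrix.mulVec_mulVec, ← Matrix.mulVec_mulVec]
    have hWu : ∀ u : Fin N × Fin n → ℝ, (W *ᵥ u) (i, l) = ∑ c : Fin N, V i c * u (c, l) := by
      intro u
      show (∑ q : Fin N × Fin n, W (i,l) q * u q) = _
      rw [Fintype.sum_prod_type]
      refine Finset.sum_congr rfl (fun c _ => ?_)
      have : ∀ d : Fin n, W (i,l) (c,d) = V i c * (if l = d then 1 else 0) := by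
        intro d
        rw [hWdef]
        simp [Matrix.kroneckerMap_apply, Matrix.one_apply]
      simp only [this, mul_ite, mul_one, mul_zero, ite_mul, zero_mul]
      rw [Finset.sum_ite_eq]
      simp
    rw [hWu]
    refine Finset.sum_congr rfl (fun c _ => ?_)
    congr 1
    show (∑ r : Fin N × Fin n, (Bd ^ k) (c,l) r * (Wᵀ *ᵥ x0) r) = _
    rw [Fintype.sum_prod_type]
    have : ∀ c' : Fin N, (∑ d : Fin n, (Bd ^ k) (c,l) (c',d) * (Wᵀ *ᵥ x0) (c',d))
        = if c = c' then ∑ d : Fin n, ((H c)^k) l d * (Wᵀ *ᵥ x0) (c',d) else 0 := by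
      intro c'
      by_cases h1 : c = c'
      · subst h1; simp [hBdk]
      · simp [hBdk, h1]
    rw [Finset.sum_congr rfl (fun c' _ => this c')]
    rw [Finset.sum_ite_eq]
    simp
  -- facts about the first column of V
  have hDVt : ∀ j : Fin N, j ≠ i0 → (Vᵀ *ᵥ (fun _ => (1:ℝ))) j = 0 := by
    have h0 : V *ᵥ ((Matrix.diagonal lam * Vᵀ) *ᵥ (fun _ => (1:ℝ))) = 0 := by
      rw [Matrix.mulVec_mulVec, ← Matrix.mul_assoc, ← hL]
      exact hL1
    have hu : (Matrix.diagonal lam * Vᵀ) *ᵥ (fun _ => (1:ℝ)) = 0 := by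
      have h2 := congrArg (fun v => Vᵀ *ᵥ v) h0
      simpa [Matrix.mulVec_mulVec, ← Matrix.mul_assoc, hV, Matrix.one_mulVec, Matrix.mulVec_zero] using h2
    intro j hj
    have h3 : (Matrix.diagonal lam *ᵥ (Vᵀ *ᵥ (fun _ => (1:ℝ)))) j = 0 := by
      rw [Matrix.mulVec_mulVec]
      rw [hu]
      rfl
    rw [Matrix.mulVec_diagonal] at h3
    have := hlampos j hj
    have hne : lam j ≠ 0 := ne_of_gt this
    exact (mul_eq_zero.mp h3).resolve_left hne
  have hVone : ∀ i : Fin N, V i i0 * (Vᵀ *ᵥ (fun _ => (1:ℝ))) i0 = 1 := by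
    intro i
    have h1 : V *ᵥ (Vᵀ *ᵥ (fun _ => (1:ℝ))) = (fun _ => (1:ℝ)) := by
      rw [Matrix.mulVec_mulVec, hVVt, Matrix.one_mulVec]
    have h2 := congrFun h1 i
    have h3 : (V *ᵥ (Vᵀ *ᵥ (fun _ => (1:ℝ)))) i
        = ∑ j : Fin N, V i j * (Vᵀ *ᵥ (fun _ => (1:ℝ))) j := rfl
    rw [h3] at h2
    rw [Finset.sum_eq_single i0 (fun j _ hj => by rw [hDVt j hj, mul_zero])
      (fun h => absurd (Finset.mem_univ i0) h)] at h2
    exact h2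
  have hVconst : ∀ i j : Fin N, V i i0 = V j i0 := by
    intro i j
    have hw : (Vᵀ *ᵥ (fun _ => (1:ℝ))) i0 ≠ 0 := by
      intro h
      have := hVone i
      rw [h, mul_zero] at this
      norm_num at this
    have h1 := hVone i
    have h2 := hVone j
    have h3 : V i i0 * (Vᵀ *ᵥ (fun _ => (1:ℝ))) i0
        = V j i0 * (Vᵀ *ᵥ (fun _ => (1:ℝ))) i0 := by rw [h1, h2]
    exact mul_right_cancel₀ hw h3
  have hVne : ∀ c : Fin N, c ≠ i0 → ∃ a b : Fin N, V a c ≠ V b c := by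
    intro c hc
    by_contra hcon
    push_neg at hcon
    have hsum0 : ∑ i : Fin N, V i c * V i i0 = 0 := by
      have := congrFun (congrFun hV c) i0
      have he : (Vᵀ * V) c i0 = ∑ i : Fin N, V i c * V i i0 := by
        rw [Matrix.mul_apply]
        exact Finset.sum_congr rfl (fun i _ => by rw [Matrix.transpose_apply])
      rw [he] at this
      rw [this]
      exact Matrix.one_apply_ne hc
    have hsum1 : ∑ i : Fin N, V i c * V i c = 1 := by
      have := congrFun (congrFun hV c) c
      have he : (Vᵀ * V) c c = ∑ i : Fin N, V i c * V i c := by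
        rw [Matrix.mul_apply]
        exact Finset.sum_congr rfl (fun i _ => by rw [Matrix.transpose_apply])
      rw [he] at this
      rw [this, Matrix.one_apply_eq]
    -- all entries of column c are equal; call the common value v
    set v := V i0 c with hv
    have hall : ∀ i : Fin N, V i c = v := fun i => hcon i i0
    -- the sum against the constant first column
    set c0 := V i0 i0 with hc0
    have hcol0 : ∀ i : Fin N, V i i0 = c0 := fun i => hVconst i i0
    have h2 : ∑ i : Fin N, V i c * V i i0 = (N : ℝ) * (v * c0) := by
      rw [Finset.sum_congr rfl (fun i _ => by rw [hall i, hcol0 i])]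
      simp [Finset.sum_const, Finset.card_univ, mul_comm]
    rw [h2] at hsum0
    have hc0ne : c0 ≠ 0 := by
      intro h
      have := hVone i0
      rw [← hc0] at this
      rw [h, zero_mul] at this
      norm_num at this
    have hNne : (N:ℝ) ≠ 0 := by positivity
    have hv0 : v = 0 := by
      rcases mul_eq_zero.mp hsum0 with h | h
      · exact absurd h hNne
      · rcases mul_eq_zero.mp h with h | h
        · exact h
        · exact absurd h hc0ne
    have h3 : ∑ i : Fin N, V i c * V i c = 0 := by
      rw [Finset.sum_congr rfl (fun i _ => by rw [hall i, hv0, mul_zero])]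
      simp
    rw [h3] at hsum1
    norm_num at hsum1
  -- the complexified blocks
  have hmapk : ∀ (c : Fin N) (k : ℕ),
      ((H c).map (fun x : ℝ => (x:ℂ))) ^ k = ((H c) ^ k).map (fun x : ℝ => (x:ℂ)) := by
    intro c k
    have : ((H c) ^ k).map (Complex.ofRealHom) = ((H c).map (Complex.ofRealHom)) ^ k := by
      rw [← RingHom.mapMatrix_apply, ← RingHom.mapMatrix_apply, _root_.map_pow]
    exact (this).symm
  constructor
  · -- consensus → roots in the open disk
    intro hcon c hc z hz
    obtain ⟨a, b, hab⟩ := hVne c hc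
    -- entries of (H c)^k tend to zero
    have hent : ∀ l m : Fin n, Tendsto (fun k => ((H c)^k) l m) atTop (nhds 0) := by
      intro l m
      set e : Fin N × Fin n → ℝ := fun q => if q = (c, m) then 1 else 0 with he
      have hy : Wᵀ *ᵥ (W *ᵥ e) = e := by
        rw [Matrix.mulVec_mulVec, hWtW, Matrix.one_mulVec]
      have hdiff : ∀ k : ℕ,
          ((M ^ k) *ᵥ (W *ᵥ e)) (a, l) - ((M ^ k) *ᵥ (W *ᵥ e)) (b, l)
            = (V a c - V b c) * ((H c)^k) l m := by
        intro k
        rw [hexp, hexp, hy]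
        rw [← Finset.sum_sub_distrib]
        have hterm : ∀ c' : Fin N,
            (V a c' * ∑ m' : Fin n, ((H c')^k) l m' * e (c', m'))
              - (V b c' * ∑ m' : Fin n, ((H c')^k) l m' * e (c', m'))
            = if c' = c then (V a c - V b c) * ((H c)^k) l m else 0 := by
          intro c'
          by_cases h1 : c' = c
          · subst h1
            have hin : (∑ m' : Fin n, ((H c')^k) l m' * e (c', m')) = ((H c')^k) l m := by
              rw [he]
              simp [Prod.ext_iff]
            rw [hin, if_pos rfl]
            ring
          · have hin : (∑ m' : Fin n, ((H c')^k) l m' * e (c', m')) = 0 := by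
              rw [he]
              have : ∀ m' : Fin n, ((H c')^k) l m' * (if (c', m') = (c, m) then (1:ℝ) else 0)
                  = 0 := by
                intro m'
                have : ¬ ((c', m') = (c, m)) := by
                  simp [Prod.ext_iff, h1]
                simp [this]
              rw [Finset.sum_congr rfl (fun m' _ => this m')]
              simp
            rw [hin, if_neg h1]
            ring
        rw [Finset.sum_congr rfl (fun c' _ => hterm c')]
        rw [Finset.sum_ite_eq']
        simp
      have h2 := hcon (W *ᵥ e) a b l
      have h3 : Tendsto (fun k : ℕ => (V a c - V b c) * ((H c)^k) l m) atTop (nhds 0) :=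
        h2.congr (fun k => hdiff k)
      have hne : V a c - V b c ≠ 0 := sub_ne_zero_of_ne hab
      have h4 := h3.const_mul (V a c - V b c)⁻¹
      simp only [← mul_assoc, inv_mul_cancel₀ hne, one_mul, mul_zero] at h4
      exact h4
    -- pass to ℂ
    have hcent : ∀ l m : Fin n, Tendsto
        (fun k => (((H c).map (fun x : ℝ => (x:ℂ))) ^ k) l m) atTop (nhds 0) := by
      intro l m
      have h1 : ∀ k : ℕ, (((H c).map (fun x : ℝ => (x:ℂ))) ^ k) l m
          = (((((H c) ^ k) l m : ℝ)) : ℂ) := by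
        intro k
        rw [hmapk]
        rfl
      simp only [h1]
      have := (Complex.continuous_ofReal.tendsto 0).comp (hent l m)
      simpa [Function.comp_def] using this
    have hdet : (z • (1 : Matrix (Fin n) (Fin n) ℂ)
        - ((H c).map (fun x : ℝ => (x:ℂ)))).det = 0 := by
      rw [hH]
      rw [charpoly_link n hn τ K (lam c) z]
      exact hz
    exact abs_lt_one_of_pow_tendsto _ hcent hdet
  · -- roots in the open disk → consensus
    intro hroots x0 i j l
    have hHk : ∀ c : Fin N, c ≠ i0 → ∀ l' m' : Fin n,
        Tendsto (fun k => ((H c)^k) l' m') atTop (nhds 0) := by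
      intro c hc l' m'
      have hspec : ∀ z ∈ spectrum ℂ ((H c).map (fun x : ℝ => (x:ℂ))), ‖z‖ < 1 := by
        intro z hzs
        have hd := (spectrum_iff_det _ z).mp hzs
        rw [hH, charpoly_link n hn τ K (lam c) z] at hd
        exact hroots c hc z hd
      have hten := pow_entry_tendsto (by omega : 0 < n) _ hspec l' m'
      have h1 : ∀ k : ℕ, (((H c).map (fun x : ℝ => (x:ℂ))) ^ k) l' m'
          = (((((H c) ^ k) l' m' : ℝ)) : ℂ) := by
        intro k
        rw [hmapk]
        rfl
      simp only [h1] at hten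
      have h2 := (Complex.continuous_re.tendsto 0).comp hten
      simpa [Function.comp_def] using h2
    have hdiff : ∀ k : ℕ,
        ((M ^ k) *ᵥ x0) (i, l) - ((M ^ k) *ᵥ x0) (j, l)
          = ∑ c : Fin N, (V i c - V j c)
              * ∑ m' : Fin n, ((H c)^k) l m' * (Wᵀ *ᵥ x0) (c, m') := by
      intro k
      rw [hexp, hexp, ← Finset.sum_sub_distrib]
      exact Finset.sum_congr rfl (fun c _ => by ring)
    have hgoal : Tendsto (fun k : ℕ => ∑ c : Fin N, (V i c - V j c)
        * ∑ m' : Fin n, ((H c)^k) l m' * (Wᵀ *ᵥ x0) (c, m')) atTop (nhds 0) := by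
      have h0 : (0:ℝ) = ∑ c : Fin N, 0 := by simp
      rw [h0]
      refine tendsto_finset_sum _ (fun c _ => ?_)
      by_cases hc : c = i0
      · subst hc
        have hz : V i i0 - V j i0 = 0 := by
          rw [hVconst i j, sub_self]
        simp only [hz, zero_mul]
        exact tendsto_const_nhds
      · have hin : Tendsto (fun k : ℕ =>
            ∑ m' : Fin n, ((H c)^k) l m' * (Wᵀ *ᵥ x0) (c, m')) atTop (nhds 0) := by
          have h0 : (0:ℝ) = ∑ m' : Fin n, 0 := by simp
          rw [h0]
          exact tendsto_finset_sum _ (fun m' _ => by simpa using (hHk c hc l m').mul_const ((Wᵀ *ᵥ x0) (c, m')))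
        have := hin.const_mul (V i c - V j c)
        simpa using this
    refine hgoal.congr (fun k => ?_)
    rw [← hdiff k]
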